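/- For any border edge m of a triangulated convex polygon, there are exactly three ways to extend the polygon by one vertex at m together with a new diagonal close to the border over the two new boundary edges: the new diagonal can be placed so that the new triangle is glued in one of three combinatorially distinct configurations relative to the triangle of Δ containing m. -/
import Mathlib


namespace CTA

/-- `x` lies strictly between `a` and `b` going anticlockwise around the `m`-gon. -/
def Btw (m : ℕ) (a x b : ZMod m) : Prop :=
  0 < (x - a).val ∧ (x - a).val < (b - a).val

/-- `p` is a diagonal of the convex `m`-gon: its endpoints are distinct and non-adjacent. -/
def IsPolyDiag (m : ℕ) (p : Sym2 (ZMod m)) : Prop :=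
  ∀ a b : ZMod m, p = s(a, b) → 2 ≤ (b - a).val ∧ 2 ≤ (a - b).val

/-- Two diagonals cross (intersect in an interior point of both). -/
def Crosses (m : ℕ) (p q : Sym2 (ZMod m)) : Prop :=
  ∃ a b c d : ZMod m, p = s(a, b) ∧ q = s(c, d) ∧ Btw m a c b ∧ Btw m b d a

/-- A triangulation: a maximal set of pairwise non-crossing diagonals. -/
def IsTriangulation (m : ℕ) (Δ : Set (Sym2 (ZMod m))) : Prop :=
  (∀ p ∈ Δ, IsPolyDiag m p) ∧
  (∀ p ∈ Δ, ∀ q ∈ Δ, ¬ Crosses m p q) ∧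
  ∀ Δ' : Set (Sym2 (ZMod m)), Δ ⊆ Δ' → (∀ p ∈ Δ', IsPolyDiag m p) →
    (∀ p ∈ Δ', ∀ q ∈ Δ', ¬ Crosses m p q) → Δ' = Δ

/-- A diagonal is close to the border if its endpoints are at boundary distance exactly 2. -/
def CloseBorder (m : ℕ) (p : Sym2 (ZMod m)) : Prop :=
  ∃ a b : ZMod m, p = s(a, b) ∧ min (b - a).val (a - b).val = 2

/-- Rotation of a triangulation by `k` vertices. -/
def rotate (m : ℕ) (k : ZMod m) (Δ : Set (Sym2 (ZMod m))) : Set (Sym2 (ZMod m)) :=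
  Sym2.map (· + k) '' Δ

/-- The orbit of a triangulation under the rotation action of `ZMod m`. -/
def rotOrbit (m : ℕ) (Δ : Set (Sym2 (ZMod m))) : Set (Set (Sym2 (ZMod m))) :=
  {Δ' | ∃ k : ZMod m, Δ' = rotate m k Δ}

/-- The number of orbits of the rotation action on triangulations of the `m`-gon. -/
noncomputable def numOrbits (m : ℕ) : ℕ :=
  Nat.card {O : Set (Set (Sym2 (ZMod m))) // ∃ Δ, IsTriangulation m Δ ∧ O = rotOrbit m Δ}

/-- The `n`-th Catalan number `(2n)!/((n+1)!·n!)`. -/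
def catalanC (n : ℕ) : ℕ :=
  Nat.factorial (2 * n) / (Nat.factorial (n + 1) * Nat.factorial n)

/-- The diagonal close to the border cutting off the vertex `v`. -/
def cutDiag (m : ℕ) (v : ZMod m) : Sym2 (ZMod m) := s(v - 1, v + 1)

/-- Deleting the vertex `v` from the `(m+1)`-gon: the order-preserving relabelling of the
remaining vertices by `ZMod m`. -/
def delVtx (m : ℕ) (v : ZMod (m + 1)) (x : ZMod (m + 1)) : ZMod m :=
  if x.val < v.val then (x.val : ZMod m) else ((x.val - 1 : ℕ) : ZMod m)

/-- Inserting a new vertex on the border edge between `a` and `a+1`: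
the induced relabelling of old vertices into `ZMod (m+1)`. -/
def insVtx (m : ℕ) (a : ZMod m) (x : ZMod m) : ZMod (m + 1) :=
  if x.val ≤ a.val then (x.val : ZMod (m + 1)) else ((x.val + 1 : ℕ) : ZMod (m + 1))

/-- Factoring out the close-to-the-border diagonal cutting off the vertex `v`:
the diagonal becomes a border edge of the smaller polygon, all other diagonals unchanged. -/
def contract (m : ℕ) (v : ZMod (m + 1)) (Δ : Set (Sym2 (ZMod (m + 1)))) :
    Set (Sym2 (ZMod m)) :=
  Sym2.map (delVtx m v) '' (Δ \ {cutDiag (m + 1) v})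

/-- An edge of the triangulated polygon: a diagonal of `Δ` or a border edge. -/
def IsEdge (m : ℕ) (Δ : Set (Sym2 (ZMod m))) (p : Sym2 (ZMod m)) : Prop :=
  p ∈ Δ ∨ ∃ a : ZMod m, p = s(a, a + 1)

/-- The arrow relation of the quiver `Q_Δ`: an arrow `p → q` when the diagonals `p` and `q`
bound a common triangle of `Δ` and `q` is obtained from `p` by anticlockwise rotation about
their common endpoint. -/
def Arrow (m : ℕ) (Δ : Set (Sym2 (ZMod m))) (p q : Sym2 (ZMod m)) : Prop :=
  p ∈ Δ ∧ q ∈ Δ ∧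
    ∃ a b c : ZMod m, p = s(a, b) ∧ q = s(a, c) ∧ IsEdge m Δ s(b, c) ∧ Btw m b c a

/-- Fomin–Zelevinsky mutation of an arrow relation (quiver with no loops, no 2-cycles and
no multiple arrows) at the vertex `k`. -/
def mutArrow (m : ℕ) (A : Sym2 (ZMod m) → Sym2 (ZMod m) → Prop) (k p q : Sym2 (ZMod m)) :
    Prop :=
  (p = k ∧ A q k) ∨
  (p ≠ k ∧ q = k ∧ A k p) ∨
  (p ≠ k ∧ q ≠ k ∧
    ((A p k ∧ A k q ∧ ¬ A q p) ∨ (A p q ∧ ¬ (A q k ∧ A k p))))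


/- ### auxiliary lemmas -/

theorem val_sub' {M : ℕ} [NeZero M] (x y : ZMod M) :
    (y - x).val = if x.val ≤ y.val then y.val - x.val else M + y.val - x.val := by
  have hx := ZMod.val_lt x
  have hy := ZMod.val_lt y
  have hxx : ((x.val : ℕ) : ZMod M) = x := by simp [ZMod.natCast_val, ZMod.cast_id]
  have hyy : ((y.val : ℕ) : ZMod M) = y := by simp [ZMod.natCast_val, ZMod.cast_id]
  split_ifs with h
  · have : y - x = ((y.val - x.val : ℕ) : ZMod M) := by
      rw [Nat.cast_sub h, hxx, hyy]
    rw [this, ZMod.val_cast_of_lt (by omega)]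
  · have : y - x = ((M + y.val - x.val : ℕ) : ZMod M) := by
      rw [Nat.cast_sub (by omega), Nat.cast_add, ZMod.natCast_self, hxx, hyy]; ring
    rw [this, ZMod.val_cast_of_lt (by omega)]

theorem ne_val {M : ℕ} [NeZero M] {x y : ZMod M} (h : x ≠ y) : x.val ≠ y.val :=
  fun hv => h (ZMod.val_injective M hv)

theorem val_one' {M : ℕ} [NeZero M] (h : 2 ≤ M) : (1 : ZMod M).val = 1 := by
  have : (1 : ZMod M) = ((1 : ℕ) : ZMod M) := by norm_cast
  rw [this, ZMod.val_cast_of_lt (by omega)]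

theorem sub_add_val {M : ℕ} [NeZero M] {x y : ZMod M} (h : x ≠ y) :
    (y - x).val + (x - y).val = M := by
  have := ne_val h
  have hx := ZMod.val_lt x
  have hy := ZMod.val_lt y
  rw [val_sub', val_sub']
  split_ifs <;> omega

theorem eq_add_of_sub_val {M : ℕ} [NeZero M] {c w : ZMod M} {k : ℕ} (hk : k < M)
    (h : (c - w).val = k) : c = w + (k : ZMod M) := by
  have : c - w = (k : ZMod M) := ZMod.val_injective M (by rw [h, ZMod.val_cast_of_lt hk])
  linear_combination this

theorem val_sub_one {M : ℕ} [NeZero M] (hM : 2 ≤ M) {z : ZMod M} (hz : z ≠ 0) :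
    (z - 1).val = z.val - 1 := by
  have h1 : (1 : ZMod M).val = 1 := val_one' hM
  have hz' : z.val ≠ 0 := by
    intro h; exact hz (by rwa [← ZMod.val_eq_zero])
  rw [val_sub' 1 z, h1, if_pos (by omega)]

theorem sub_one_ne {M : ℕ} [NeZero M] (hM : 2 ≤ M) (v : ZMod M) : v - 1 ≠ v := by
  intro h
  have h0 : (1 : ZMod M) = 0 := by linear_combination -h
  have := val_one' hM
  rw [h0, ZMod.val_zero] at this
  omega

theorem add_one_ne {M : ℕ} [NeZero M] (hM : 2 ≤ M) (v : ZMod M) : v + 1 ≠ v := by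
  intro h
  have h0 : (1 : ZMod M) = 0 := by linear_combination h
  have := val_one' hM
  rw [h0, ZMod.val_zero] at this
  omega

theorem cut_width1 {M : ℕ} [NeZero M] (hM : 3 ≤ M) (v : ZMod M) :
    ((v + 1) - (v - 1)).val = 2 := by
  have : (v + 1) - (v - 1) = ((2 : ℕ) : ZMod M) := by push_cast; ring
  rw [this, ZMod.val_cast_of_lt (by omega)]

theorem cut_endpoints_ne {M : ℕ} [NeZero M] (hM : 3 ≤ M) (v : ZMod M) : v - 1 ≠ v + 1 := by
  intro h
  have := cut_width1 hM v
  rw [← h, sub_self, ZMod.val_zero] at this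
  omega

theorem cut_width2 {M : ℕ} [NeZero M] (hM : 3 ≤ M) (v : ZMod M) :
    ((v - 1) - (v + 1)).val = M - 2 := by
  have h := sub_add_val (cut_endpoints_ne hM v)
  have := cut_width1 hM v
  omega

theorem not_crosses_self (M : ℕ) (p : Sym2 (ZMod M)) : ¬ Crosses M p p := by
  rintro ⟨a, b, c, d, h1, h2, h3, h4⟩
  rw [h1, Sym2.eq_iff] at h2
  unfold Btw at h3 h4
  rcases h2 with ⟨rfl, rfl⟩ | ⟨rfl, rfl⟩
  · simp at h3
  · omega

theorem crosses_symm {M : ℕ} [NeZero M] {p q : Sym2 (ZMod M)} (h : Crosses M p q) :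
    Crosses M q p := by
  obtain ⟨a, b, c, d, hp, hq, h1, h2⟩ := h
  refine ⟨c, d, b, a, hq, by rw [hp, Sym2.eq_swap], ?_, ?_⟩ <;>
  · unfold Btw at h1 h2 ⊢
    have ha := ZMod.val_lt a
    have hb := ZMod.val_lt b
    have hc := ZMod.val_lt c
    have hd := ZMod.val_lt d
    rw [val_sub' a c, val_sub' a b] at h1
    rw [val_sub' b d, val_sub' b a] at h2
    rw [val_sub']
    rw [val_sub']
    split_ifs at h1 h2 ⊢ <;> omega

theorem isPolyDiag_mk {M : ℕ} {x y : ZMod M} (h1 : 2 ≤ (y - x).val) (h2 : 2 ≤ (x - y).val) :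
    IsPolyDiag M s(x, y) := by
  intro a b hab
  rw [Sym2.eq_iff] at hab
  rcases hab with ⟨rfl, rfl⟩ | ⟨rfl, rfl⟩ <;> exact ⟨‹_›, ‹_›⟩

theorem mem_of_noncross {m : ℕ} {Δ : Set (Sym2 (ZMod m))} (hΔ : IsTriangulation m Δ)
    {p : Sym2 (ZMod m)} (hd : IsPolyDiag m p) (h1 : ∀ q ∈ Δ, ¬ Crosses m p q)
    (h2 : ∀ q ∈ Δ, ¬ Crosses m q p) : p ∈ Δ := by
  have key := hΔ.2.2 (insert p Δ) (Set.subset_insert p Δ) ?_ ?_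
  · rw [← key]; exact Set.mem_insert _ _
  · intro q hq
    rcases Set.mem_insert_iff.1 hq with rfl | hq
    · exact hd
    · exact hΔ.1 q hq
  · intro q hq r hr
    rcases Set.mem_insert_iff.1 hq with hq1 | hq1 <;>
      rcases Set.mem_insert_iff.1 hr with hr1 | hr1
    · rw [hq1, hr1]; exact not_crosses_self m p
    · rw [hq1]; exact h1 r hr1
    · rw [hr1]; exact h2 q hq1
    · exact hΔ.2.1 q hq1 r hr1

/- ### delVtx / liftVtx -/

def liftVtx (m : ℕ) (v : ZMod (m + 1)) (y : ZMod m) : ZMod (m + 1) :=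
  if y.val < v.val then (y.val : ZMod (m + 1)) else ((y.val + 1 : ℕ) : ZMod (m + 1))

theorem delVtx_val (m : ℕ) [NeZero m] (v x : ZMod (m + 1)) :
    (delVtx m v x).val = if x.val < v.val then x.val else x.val - 1 := by
  have hx := ZMod.val_lt x
  have hv := ZMod.val_lt v
  have hm : 0 < m := Nat.pos_of_ne_zero (NeZero.ne m)
  unfold delVtx
  split_ifs with h
  · rw [ZMod.val_cast_of_lt (by omega)]
  · rw [ZMod.val_cast_of_lt (by omega)]

theorem liftVtx_val (m : ℕ) [NeZero m] (v : ZMod (m + 1)) (y : ZMod m) :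
    (liftVtx m v y).val = if y.val < v.val then y.val else y.val + 1 := by
  have hy := ZMod.val_lt y
  have hv := ZMod.val_lt v
  have hm : 0 < m := Nat.pos_of_ne_zero (NeZero.ne m)
  unfold liftVtx
  split_ifs with h
  · rw [ZMod.val_cast_of_lt (by omega)]
  · rw [ZMod.val_cast_of_lt (by omega)]

theorem liftVtx_ne (m : ℕ) [NeZero m] (v : ZMod (m + 1)) (y : ZMod m) :
    liftVtx m v y ≠ v := by
  intro h
  have := congrArg ZMod.val h
  rw [liftVtx_val] at this
  split_ifs at this <;> omega

theorem delVtx_liftVtx (m : ℕ) [NeZero m] (v : ZMod (m + 1)) (y : ZMod m) :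
    delVtx m v (liftVtx m v y) = y := by
  apply ZMod.val_injective
  rw [delVtx_val, liftVtx_val]
  have hy := ZMod.val_lt y
  split_ifs <;> omega

theorem liftVtx_delVtx (m : ℕ) [NeZero m] (v x : ZMod (m + 1)) (hx : x ≠ v) :
    liftVtx m v (delVtx m v x) = x := by
  apply ZMod.val_injective
  rw [liftVtx_val, delVtx_val]
  have hx' := ne_val hx
  have hxl := ZMod.val_lt x
  have hv := ZMod.val_lt v
  split_ifs <;> omega

theorem delVtx_sub (m : ℕ) [NeZero m] (v x y : ZMod (m + 1)) (hx : x ≠ v) (hy : y ≠ v) :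
    (delVtx m v y - delVtx m v x).val
      = (y - x).val - (if 0 < (v - x).val ∧ (v - x).val < (y - x).val then 1 else 0) := by
  have hxv := ne_val hx
  have hyv := ne_val hy
  have h1 := ZMod.val_lt x
  have h2 := ZMod.val_lt y
  have h3 := ZMod.val_lt v
  rw [val_sub', val_sub', val_sub', delVtx_val, delVtx_val]
  have hm : 0 < m := Nat.pos_of_ne_zero (NeZero.ne m)
  split_ifs <;> omega

theorem arc_dichotomy {M : ℕ} [NeZero M] {x y v : ZMod M} (hxy : x ≠ y) (hvx : v ≠ x)
    (hvy : v ≠ y) :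
    ((v - x).val < (y - x).val ∧ ¬ ((v - y).val < (x - y).val)) ∨
      (¬ ((v - x).val < (y - x).val) ∧ (v - y).val < (x - y).val) := by
  have h1 := ne_val hxy
  have h2 := ne_val hvx
  have h3 := ne_val hvy
  have b1 := ZMod.val_lt x
  have b2 := ZMod.val_lt y
  have b3 := ZMod.val_lt v
  rw [val_sub' x v, val_sub' x y, val_sub' y v, val_sub' y x]
  split_ifs <;> omega

theorem btw_down (m : ℕ) [NeZero m] (v X C Y : ZMod (m + 1)) (hX : X ≠ v) (hC : C ≠ v)
    (hY : Y ≠ v) (h : Btw (m + 1) X C Y) :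
    Btw m (delVtx m v X) (delVtx m v C) (delVtx m v Y) := by
  unfold Btw at h ⊢
  rw [delVtx_sub m v X C hX hC, delVtx_sub m v X Y hX hY]
  have hvX : (v - X).val ≠ 0 := by
    intro h0
    rw [ZMod.val_eq_zero] at h0
    exact hX (by linear_combination -h0)
  have hvC : (v - X).val ≠ (C - X).val := by
    intro h0
    have h0' : v - X = C - X := ZMod.val_injective (m + 1) h0
    exact hC (by linear_combination -h0')
  split_ifs <;> omega

theorem btw_up (m : ℕ) [NeZero m] (v X C Y : ZMod (m + 1)) (hX : X ≠ v) (hC : C ≠ v)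
    (hY : Y ≠ v) (h : Btw m (delVtx m v X) (delVtx m v C) (delVtx m v Y)) :
    Btw (m + 1) X C Y := by
  unfold Btw at h ⊢
  rw [delVtx_sub m v X C hX hC, delVtx_sub m v X Y hX hY] at h
  split_ifs at h <;> omega
/- ### the extension construction -/

def extT (m : ℕ) (v : ZMod (m + 1)) (Δ : Set (Sym2 (ZMod m))) : Set (Sym2 (ZMod (m + 1))) :=
  insert (cutDiag (m + 1) v) (Sym2.map (liftVtx m v) '' Δ)

theorem crosses_cut (m : ℕ) [NeZero m] (hm : 3 ≤ m) (v w : ZMod (m + 1))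
    (h1 : 2 ≤ (w - v).val) (h2 : 2 ≤ (v - w).val) :
    Crosses (m + 1) s(v, w) (cutDiag (m + 1) v) := by
  have hz : v - w ≠ 0 := by
    intro h; rw [h, ZMod.val_zero] at h2; omega
  have he : v - 1 - w = (v - w) - 1 := by ring
  have he2 : v + 1 - v = 1 := by ring
  refine ⟨w, v, v - 1, v + 1, Sym2.eq_swap, rfl, ⟨?_, ?_⟩, ⟨?_, ?_⟩⟩
  · rw [he, val_sub_one (by omega) hz]; omega
  · rw [he, val_sub_one (by omega) hz]; omega
  · rw [he2, val_one' (by omega)]; omega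
  · rw [he2, val_one' (by omega)]; omega

theorem mem_lift_ne (m : ℕ) [NeZero m] (v : ZMod (m + 1)) (p : Sym2 (ZMod m))
    {x : ZMod (m + 1)} (hx : x ∈ Sym2.map (liftVtx m v) p) : x ≠ v := by
  rw [Sym2.mem_map] at hx
  obtain ⟨y, -, rfl⟩ := hx
  exact liftVtx_ne m v y

theorem not_crosses_cut_of (m : ℕ) [NeZero m] (hm : 3 ≤ m) (v : ZMod (m + 1))
    (q : Sym2 (ZMod (m + 1))) (hq : ∀ x ∈ q, x ≠ v) :
    ¬ Crosses (m + 1) (cutDiag (m + 1) v) q := by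
  rintro ⟨a, b, c, d, hab, hcd, h1, h2⟩
  have hc : c ≠ v := hq c (by rw [hcd]; exact Sym2.mem_mk_left c d)
  have hd : d ≠ v := hq d (by rw [hcd]; exact Sym2.mem_mk_right c d)
  have hw1 := cut_width1 (show 3 ≤ m + 1 by omega) v
  unfold cutDiag at hab
  rw [Sym2.eq_iff] at hab
  obtain ⟨ha, hb⟩ | ⟨ha, hb⟩ := hab
  · subst ha; subst hb
    obtain ⟨hp1, hp2⟩ := h1
    rw [hw1] at hp2
    have hcv : c = v - 1 + ((1 : ℕ) : ZMod (m + 1)) := eq_add_of_sub_val (by omega) (by omega)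
    exact hc (by rw [hcv]; push_cast; ring)
  · subst ha; subst hb
    obtain ⟨hp1, hp2⟩ := h2
    rw [hw1] at hp2
    have hdv : d = v - 1 + ((1 : ℕ) : ZMod (m + 1)) := eq_add_of_sub_val (by omega) (by omega)
    exact hd (by rw [hdv]; push_cast; ring)

theorem map_delVtx_liftVtx (m : ℕ) [NeZero m] (v : ZMod (m + 1)) (p : Sym2 (ZMod m)) :
    Sym2.map (delVtx m v) (Sym2.map (liftVtx m v) p) = p := by
  induction p using Sym2.ind with
  | _ x y => rw [Sym2.map_pair_eq, Sym2.map_pair_eq, delVtx_liftVtx, delVtx_liftVtx]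

theorem map_liftVtx_delVtx (m : ℕ) [NeZero m] (v : ZMod (m + 1)) (p : Sym2 (ZMod (m + 1)))
    (h : ∀ x ∈ p, x ≠ v) :
    Sym2.map (liftVtx m v) (Sym2.map (delVtx m v) p) = p := by
  induction p using Sym2.ind with
  | _ x y =>
    rw [Sym2.map_pair_eq, Sym2.map_pair_eq,
      liftVtx_delVtx m v x (h x (Sym2.mem_mk_left x y)),
      liftVtx_delVtx m v y (h y (Sym2.mem_mk_right x y))]

theorem contract_extT (m : ℕ) [NeZero m] (hm : 3 ≤ m) (v : ZMod (m + 1))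
    {Δ : Set (Sym2 (ZMod m))} (hdiag : ∀ p ∈ Δ, IsPolyDiag m p) :
    contract m v (extT m v Δ) = Δ := by
  have hnotmem : cutDiag (m + 1) v ∉ Sym2.map (liftVtx m v) '' Δ := by
    rintro ⟨p, hp, hpe⟩
    have hpe' : p = Sym2.map (delVtx m v) (cutDiag (m + 1) v) := by
      rw [← hpe, map_delVtx_liftVtx]
    have h1 : ((delVtx m v (v + 1)) - (delVtx m v (v - 1))).val = 1 := by
      rw [delVtx_sub m v (v - 1) (v + 1) (sub_one_ne (by omega) v) (add_one_ne (by omega) v)]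
      have e1 : v - (v - 1) = 1 := by ring
      rw [e1, val_one' (by omega), cut_width1 (by omega : 3 ≤ m + 1) v, if_pos (by omega)]
    have h2 := hdiag p hp (delVtx m v (v - 1)) (delVtx m v (v + 1))
      (by rw [hpe']; unfold cutDiag; rw [Sym2.map_pair_eq])
    omega
  unfold contract extT
  rw [Set.insert_diff_self_of_notMem hnotmem, Set.image_image]
  rw [Set.image_congr (fun p _ => map_delVtx_liftVtx m v p), Set.image_id']

theorem ext_unique (m : ℕ) [NeZero m] (hm : 3 ≤ m) (v : ZMod (m + 1))
    (Δ : Set (Sym2 (ZMod m))) (P : Set (Sym2 (ZMod (m + 1))))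
    (hP : IsTriangulation (m + 1) P) (hc : cutDiag (m + 1) v ∈ P)
    (hcon : contract m v P = Δ) : P = extT m v Δ := by
  have hend : ∀ Q ∈ P \ {cutDiag (m + 1) v}, ∀ x ∈ Q, x ≠ v := by
    intro Q hQ x hxQ hxv
    subst hxv
    obtain ⟨w, hw⟩ := Sym2.mem_iff_exists.1 hxQ
    have hpoly := hP.1 Q hQ.1 x w hw
    have hcr := crosses_cut m hm x w hpoly.1 hpoly.2
    rw [← hw] at hcr
    exact hP.2.1 Q hQ.1 (cutDiag (m + 1) x) hc hcr
  have him : Sym2.map (liftVtx m v) '' Δ = P \ {cutDiag (m + 1) v} := by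
    rw [← hcon]
    unfold contract
    rw [Set.image_image]
    rw [Set.image_congr (fun Q hQ => map_liftVtx_delVtx m v Q (hend Q hQ)), Set.image_id']
  unfold extT
  rw [him, Set.insert_diff_singleton, Set.insert_eq_self.2 hc]

theorem closeBorder_cut (m : ℕ) [NeZero m] (hm : 3 ≤ m) (v : ZMod (m + 1)) :
    CloseBorder (m + 1) (cutDiag (m + 1) v) := by
  refine ⟨v - 1, v + 1, rfl, ?_⟩
  rw [cut_width1 (by omega) v, cut_width2 (by omega) v]
  omega
theorem extT_isTri (m : ℕ) [NeZero m] (hm : 3 ≤ m) (v : ZMod (m + 1))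
    {Δ : Set (Sym2 (ZMod m))} (hΔ : IsTriangulation m Δ) :
    IsTriangulation (m + 1) (extT m v Δ) := by
  have hM : 3 ≤ m + 1 := by omega
  refine ⟨?_, ?_, ?_⟩
  · -- all diagonals
    intro p hp
    rcases Set.mem_insert_iff.1 hp with hp' | ⟨q, hq, hq'⟩
    · subst hp'
      intro x y hxy
      unfold cutDiag at hxy
      rw [Sym2.eq_iff] at hxy
      have w1 := cut_width1 hM v
      have w2 := cut_width2 hM v
      rcases hxy with ⟨rfl, rfl⟩ | ⟨rfl, rfl⟩
      · exact ⟨by omega, by omega⟩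
      · exact ⟨by omega, by omega⟩
    · subst hq'
      revert hq
      induction q using Sym2.ind with
      | _ x y =>
        intro hq
        have hpoly := hΔ.1 _ hq x y rfl
        rw [Sym2.map_pair_eq]
        have key1 := delVtx_sub m v (liftVtx m v x) (liftVtx m v y)
          (liftVtx_ne m v x) (liftVtx_ne m v y)
        have key2 := delVtx_sub m v (liftVtx m v y) (liftVtx m v x)
          (liftVtx_ne m v y) (liftVtx_ne m v x)
        rw [delVtx_liftVtx, delVtx_liftVtx] at key1 key2
        apply isPolyDiag_mk
        · split_ifs at key1 <;> omega
        · split_ifs at key2 <;> omega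
  · -- noncrossing
    intro p hp q hq
    rcases Set.mem_insert_iff.1 hp with hp' | hp'
    · rcases Set.mem_insert_iff.1 hq with hq' | hq'
      · rw [hp', hq']; exact not_crosses_self _ _
      · obtain ⟨q0, hq0, hq1⟩ := hq'
        rw [hp', ← hq1]
        exact not_crosses_cut_of m hm v _ (fun x hx => mem_lift_ne m v q0 hx)
    · obtain ⟨p0, hp0, hp1⟩ := hp'
      rcases Set.mem_insert_iff.1 hq with hq' | hq'
      · rw [hq', ← hp1]
        intro hcr
        exact not_crosses_cut_of m hm v _ (fun x hx => mem_lift_ne m v p0 hx) (crosses_symm hcr)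
      · obtain ⟨q0, hq0, hq1⟩ := hq'
        rw [← hp1, ← hq1]
        rintro ⟨A, B, C, D, hAB, hCD, h1, h2⟩
        have hA : A ≠ v := mem_lift_ne m v p0 (by rw [hAB]; exact Sym2.mem_mk_left A B)
        have hB : B ≠ v := mem_lift_ne m v p0 (by rw [hAB]; exact Sym2.mem_mk_right A B)
        have hC : C ≠ v := mem_lift_ne m v q0 (by rw [hCD]; exact Sym2.mem_mk_left C D)
        have hD : D ≠ v := mem_lift_ne m v q0 (by rw [hCD]; exact Sym2.mem_mk_right C D)
        refine hΔ.2.1 p0 hp0 q0 hq0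
          ⟨delVtx m v A, delVtx m v B, delVtx m v C, delVtx m v D, ?_, ?_,
            btw_down m v A C B hA hC hB h1, btw_down m v B D A hB hD hA h2⟩
        · rw [← map_delVtx_liftVtx m v p0, hAB, Sym2.map_pair_eq]
        · rw [← map_delVtx_liftVtx m v q0, hCD, Sym2.map_pair_eq]
  · -- maximality
    intro Δ' hsub hdiag' hnc'
    have key : ∀ X Y : ZMod (m + 1), s(X, Y) ∈ Δ' → s(X, Y) ∈ extT m v Δ := by
      intro X Y hpΔ'
      have hd := hdiag' _ hpΔ' X Y rfl
      have hcutmem : cutDiag (m + 1) v ∈ Δ' := hsub (Set.mem_insert _ _)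
      by_cases hXv : X = v
      · exfalso
        subst hXv
        exact hnc' _ hpΔ' _ hcutmem (crosses_cut m hm X Y hd.1 hd.2)
      by_cases hYv : Y = v
      · exfalso
        subst hYv
        have hcr := crosses_cut m hm Y X hd.2 hd.1
        rw [(Sym2.eq_swap : s(Y, X) = s(X, Y))] at hcr
        exact hnc' _ hpΔ' _ hcutmem hcr
      by_cases hcut : s(X, Y) = cutDiag (m + 1) v
      · rw [hcut]; exact Set.mem_insert _ _
      have hXY : X ≠ Y := by
        intro h
        have := hd.1
        rw [h, sub_self, ZMod.val_zero] at this
        omega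
      have hvX : v ≠ X := fun h => hXv h.symm
      have hvY : v ≠ Y := fun h => hYv h.symm
      have key1 := delVtx_sub m v X Y hXv hYv
      have key2 := delVtx_sub m v Y X hYv hXv
      have hdich := arc_dichotomy hXY hvX hvY
      have hvX0 : 0 < (v - X).val := by
        rcases Nat.eq_zero_or_pos (v - X).val with h0 | h0
        · exfalso; rw [ZMod.val_eq_zero] at h0; exact hvX (by linear_combination h0)
        · exact h0
      have hvY0 : 0 < (v - Y).val := by
        rcases Nat.eq_zero_or_pos (v - Y).val with h0 | h0
        · exfalso; rw [ZMod.val_eq_zero] at h0; exact hvY (by linear_combination h0)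
        · exact h0
      have hne2 : 2 ≤ (delVtx m v Y - delVtx m v X).val ∧
          2 ≤ (delVtx m v X - delVtx m v Y).val := by
        rcases hdich with ⟨hA, hB⟩ | ⟨hA, hB⟩
        · rw [if_pos ⟨hvX0, hA⟩] at key1
          rw [if_neg (fun hcc => hB hcc.2)] at key2
          rcases Nat.lt_or_ge 2 (Y - X).val with h3 | h3
          · constructor <;> omega
          · exfalso
            have hYX2 : (Y - X).val = 2 := by omega
            have hvX1 : (v - X).val = 1 := by omega
            have hv : v = X + ((1 : ℕ) : ZMod (m + 1)) := eq_add_of_sub_val (by omega) hvX1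
            have hY : Y = X + ((2 : ℕ) : ZMod (m + 1)) := eq_add_of_sub_val (by omega) hYX2
            apply hcut
            unfold cutDiag
            have e1 : v - 1 = X := by rw [hv]; push_cast; ring
            have e2 : v + 1 = Y := by rw [hv, hY]; push_cast; ring
            rw [e1, e2]
        · rw [if_neg (fun hcc => hA hcc.2)] at key1
          rw [if_pos ⟨hvY0, hB⟩] at key2
          rcases Nat.lt_or_ge 2 (X - Y).val with h3 | h3
          · constructor <;> omega
          · exfalso
            have hXY2 : (X - Y).val = 2 := by omega
            have hvY1 : (v - Y).val = 1 := by omega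
            have hv : v = Y + ((1 : ℕ) : ZMod (m + 1)) := eq_add_of_sub_val (by omega) hvY1
            have hX : X = Y + ((2 : ℕ) : ZMod (m + 1)) := eq_add_of_sub_val (by omega) hXY2
            apply hcut
            unfold cutDiag
            have e1 : v - 1 = Y := by rw [hv]; push_cast; ring
            have e2 : v + 1 = X := by rw [hv, hX]; push_cast; ring
            rw [e1, e2]
            exact Sym2.eq_swap
      have hlXY : s(X, Y) = Sym2.map (liftVtx m v) s(delVtx m v X, delVtx m v Y) := by
        rw [Sym2.map_pair_eq, liftVtx_delVtx m v X hXv, liftVtx_delVtx m v Y hYv]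
      have hmem : s(delVtx m v X, delVtx m v Y) ∈ Δ := by
        apply mem_of_noncross hΔ (isPolyDiag_mk hne2.1 hne2.2)
        · intro q hq hcr
          obtain ⟨A', B', C', D', h1', h2', h3', h4'⟩ := hcr
          apply hnc' s(X, Y) hpΔ' (Sym2.map (liftVtx m v) q)
            (hsub (Set.mem_insert_of_mem _ ⟨q, hq, rfl⟩))
          refine ⟨liftVtx m v A', liftVtx m v B', liftVtx m v C', liftVtx m v D',
            ?_, ?_, ?_, ?_⟩
          · rw [hlXY, h1', Sym2.map_pair_eq]
          · rw [h2', Sym2.map_pair_eq]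
          · exact btw_up m v _ _ _ (liftVtx_ne m v A') (liftVtx_ne m v C') (liftVtx_ne m v B')
              (by rw [delVtx_liftVtx, delVtx_liftVtx, delVtx_liftVtx]; exact h3')
          · exact btw_up m v _ _ _ (liftVtx_ne m v B') (liftVtx_ne m v D') (liftVtx_ne m v A')
              (by rw [delVtx_liftVtx, delVtx_liftVtx, delVtx_liftVtx]; exact h4')
        · intro q hq hcr
          obtain ⟨A', B', C', D', h1', h2', h3', h4'⟩ := hcr
          apply hnc' (Sym2.map (liftVtx m v) q)
            (hsub (Set.mem_insert_of_mem _ ⟨q, hq, rfl⟩)) s(X, Y) hpΔ'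
          refine ⟨liftVtx m v A', liftVtx m v B', liftVtx m v C', liftVtx m v D',
            ?_, ?_, ?_, ?_⟩
          · rw [h1', Sym2.map_pair_eq]
          · rw [hlXY, h2', Sym2.map_pair_eq]
          · exact btw_up m v _ _ _ (liftVtx_ne m v A') (liftVtx_ne m v C') (liftVtx_ne m v B')
              (by rw [delVtx_liftVtx, delVtx_liftVtx, delVtx_liftVtx]; exact h3')
          · exact btw_up m v _ _ _ (liftVtx_ne m v B') (liftVtx_ne m v D') (liftVtx_ne m v A')
              (by rw [delVtx_liftVtx, delVtx_liftVtx, delVtx_liftVtx]; exact h4')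
      rw [hlXY]
      exact Set.mem_insert_of_mem _ ⟨_, hmem, rfl⟩
    refine Set.Subset.antisymm ?_ hsub
    intro p
    induction p using Sym2.ind with
    | _ X Y => exact key X Y

/-- For any border edge (between `a` and `a+1`) of a triangulated convex `(n+3)`-gon there
are exactly three ways to extend the polygon by one vertex at that edge together with a new
diagonal close to the border, i.e. exactly three pairs of a triangulation of the
`(n+4)`-gon and a close-to-the-border diagonal cutting off the new vertex or one of its two
neighbours whose contraction recovers `Δ`. -/
theorem three_extensions (n : ℕ) (Δ : Set (Sym2 (ZMod (n + 3)))) (a : ZMod (n + 3))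
    (hΔ : IsTriangulation (n + 3) Δ) :
    Set.ncard {P : Set (Sym2 (ZMod (n + 4))) × ZMod (n + 4) |
      IsTriangulation (n + 4) P.1 ∧
      (P.2 = insVtx (n + 3) a a ∨ P.2 = ((a.val + 1 : ℕ) : ZMod (n + 4)) ∨
        P.2 = insVtx (n + 3) a (a + 1)) ∧
      cutDiag (n + 4) P.2 ∈ P.1 ∧ CloseBorder (n + 4) (cutDiag (n + 4) P.2) ∧
      contract (n + 3) P.2 P.1 = Δ} = 3 := by
  have hm3 : 3 ≤ n + 3 := by omega
  have hav := ZMod.val_lt a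
  set v0 : ZMod (n + 4) := insVtx (n + 3) a a with hv0def
  set v1 : ZMod (n + 4) := ((a.val + 1 : ℕ) : ZMod (n + 4)) with hv1def
  set v2 : ZMod (n + 4) := insVtx (n + 3) a (a + 1) with hv2def
  have hv0 : v0.val = a.val := by
    rw [hv0def]; unfold insVtx
    rw [if_pos le_rfl, ZMod.val_cast_of_lt (by omega)]
  have hv1 : v1.val = a.val + 1 := by
    rw [hv1def]; exact ZMod.val_cast_of_lt (by omega)
  have ha1 : (a + 1).val = (a.val + 1) % (n + 3) := by
    rw [ZMod.val_add, val_one' (by omega)]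
  have hv2 : (v2.val = 0 ∧ a.val = n + 2) ∨ (v2.val = a.val + 2 ∧ a.val < n + 2) := by
    rcases Nat.lt_or_ge a.val (n + 2) with h | h
    · right
      refine ⟨?_, h⟩
      have ha1' : (a + 1).val = a.val + 1 := by rw [ha1, Nat.mod_eq_of_lt (by omega)]
      rw [hv2def]; unfold insVtx
      rw [ha1', if_neg (by omega), ZMod.val_cast_of_lt (by omega)]
    · left
      have ha : a.val = n + 2 := by omega
      have he : a.val + 1 = n + 3 := by omega
      have ha1' : (a + 1).val = 0 := by rw [ha1, he, Nat.mod_self]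
      refine ⟨?_, ha⟩
      rw [hv2def]; unfold insVtx
      rw [ha1', if_pos (by omega)]
      simp
  have h01 : v0 ≠ v1 := fun h => by
    have := congrArg ZMod.val h; omega
  have h02 : v0 ≠ v2 := fun h => by
    have := congrArg ZMod.val h
    rcases hv2 with ⟨h2, h2'⟩ | ⟨h2, h2'⟩ <;> omega
  have h12 : v1 ≠ v2 := fun h => by
    have := congrArg ZMod.val h
    rcases hv2 with ⟨h2, h2'⟩ | ⟨h2, h2'⟩ <;> omega
  have hSeq : {P : Set (Sym2 (ZMod (n + 4))) × ZMod (n + 4) |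
      IsTriangulation (n + 4) P.1 ∧
      (P.2 = v0 ∨ P.2 = v1 ∨ P.2 = v2) ∧
      cutDiag (n + 4) P.2 ∈ P.1 ∧ CloseBorder (n + 4) (cutDiag (n + 4) P.2) ∧
      contract (n + 3) P.2 P.1 = Δ} =
      {(extT (n + 3) v0 Δ, v0), (extT (n + 3) v1 Δ, v1), (extT (n + 3) v2 Δ, v2)} := by
    ext ⟨P1, u⟩
    simp only [Set.mem_setOf_eq, Set.mem_insert_iff, Set.mem_singleton_iff, Prod.mk.injEq]
    constructor
    · rintro ⟨hT, hu, hcut, hcb, hcon⟩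
      have hP1 : P1 = extT (n + 3) u Δ := ext_unique (n + 3) hm3 u Δ P1 hT hcut hcon
      rcases hu with rfl | rfl | rfl
      · exact Or.inl ⟨hP1, rfl⟩
      · exact Or.inr (Or.inl ⟨hP1, rfl⟩)
      · exact Or.inr (Or.inr ⟨hP1, rfl⟩)
    · rintro (⟨h1, rfl⟩ | ⟨h1, rfl⟩ | ⟨h1, rfl⟩) <;> subst h1
      · exact ⟨extT_isTri (n + 3) hm3 v0 hΔ, Or.inl rfl, Set.mem_insert _ _,
          closeBorder_cut (n + 3) hm3 v0, contract_extT (n + 3) hm3 v0 hΔ.1⟩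
      · exact ⟨extT_isTri (n + 3) hm3 v1 hΔ, Or.inr (Or.inl rfl), Set.mem_insert _ _,
          closeBorder_cut (n + 3) hm3 v1, contract_extT (n + 3) hm3 v1 hΔ.1⟩
      · exact ⟨extT_isTri (n + 3) hm3 v2 hΔ, Or.inr (Or.inr rfl), Set.mem_insert _ _,
          closeBorder_cut (n + 3) hm3 v2, contract_extT (n + 3) hm3 v2 hΔ.1⟩
  rw [hSeq]
  rw [Set.ncard_insert_of_notMem (by
      simp only [Set.mem_insert_iff, Set.mem_singleton_iff, Prod.mk.injEq, not_or]
      exact ⟨fun h => h01 h.2, fun h => h02 h.2⟩) (Set.toFinite _),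
    Set.ncard_insert_of_notMem (by
      simp only [Set.mem_singleton_iff, Prod.mk.injEq, not_or]
      exact fun h => h12 h.2) (Set.toFinite _),
    Set.ncard_singleton]


end CTA
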